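/- Let n ≥ 2 and c ∈ ℝ. If for every n×n real positive semidefinite matrix A the matrix f_*[A] (diagonal unchanged, off-diagonal entries multiplied by c) is positive semidefinite, then c ∈ [−1/(n−1), 1]. -/

import Mathlib

theorem fstar_posSemidef_necessity (n : ℕ) (hn : 2 ≤ n) (c : ℝ)
    (h : ∀ A : Matrix (Fin n) (Fin n) ℝ, A.PosSemidef →
      (Matrix.of fun i j => if i = j then A i j else c * A i j).PosSemidef) :
    c ∈ Set.Icc (-1 / (n - 1) : ℝ) 1 := by
  haveI : NeZero n := ⟨by omega⟩
  -- the all-ones matrix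
  set A : Matrix (Fin n) (Fin n) ℝ := Matrix.of (fun _ _ => (1:ℝ)) with hA
  have hApsd : A.PosSemidef := by
    rw [Matrix.posSemidef_iff_dotProduct_mulVec]
    constructor
    · ext i j; simp [A, Matrix.IsHermitian]
    · intro x
      have : (dotProduct (star x) (A.mulVec x)) = (∑ i, x i) ^ 2 := by
        simp [dotProduct, Matrix.mulVec, A, Finset.mul_sum, ← Finset.sum_mul, sq,
          mul_comm]
      rw [this]
      positivity
  have hB := h A hApsd
  set B : Matrix (Fin n) (Fin n) ℝ :=
    Matrix.of (fun i j => if i = j then A i j else c * A i j) with hBdef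
  have key : ∀ x : Fin n → ℝ,
      dotProduct (star x) (B.mulVec x)
        = c * (∑ i, x i) ^ 2 + (1 - c) * ∑ i, (x i) ^ 2 := by
    intro x
    have hrow : ∀ i, (B.mulVec x) i = c * (∑ j, x j) + (1 - c) * x i := by
      intro i
      have : ∀ j, B i j * x j = c * x j + (if i = j then (1 - c) * x j else 0) := by
        intro j
        by_cases hij : i = j <;> simp [B, A, hij] <;> ring
      simp only [Matrix.mulVec, dotProduct, this, Finset.sum_add_distrib,
        Finset.sum_ite_eq, Finset.mem_univ, if_true, ← Finset.mul_sum]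
    simp only [dotProduct, hrow, star, Pi.star_apply, star_trivial, id_eq]
    rw [Finset.sum_congr rfl (fun i _ => by ring :
      ∀ i ∈ Finset.univ, x i * (c * (∑ j, x j) + (1 - c) * x i)
        = c * x i * (∑ j, x j) + (1 - c) * (x i)^2)]
    rw [Finset.sum_add_distrib, ← Finset.mul_sum, ← Finset.sum_mul]
    have : (∑ i, c * x i) = c * ∑ i, x i := by rw [Finset.mul_sum]
    rw [this]; ring
  have hn1 : (1:ℝ) ≤ (n:ℝ) - 1 := by
    have : (2:ℝ) ≤ n := by exact_mod_cast hn
    linarith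
  constructor
  · -- lower bound: test with all-ones vector
    have h1 := hB.dotProduct_mulVec_nonneg (fun _ => (1:ℝ))
    rw [key] at h1
    simp at h1
    -- h1 : 0 ≤ c * n^2 + (1-c) * n
    rw [div_le_iff₀ (by linarith : (0:ℝ) < (n:ℝ) - 1)]
    have hnpos : (0:ℝ) < n := by linarith
    nlinarith [h1, hnpos]
  · -- upper bound: test with e0 - e1
    set v : Fin n → ℝ := fun i => if i = 0 then 1 else if i = 1 then -1 else 0 with hv
    have h01 : (0 : Fin n) ≠ 1 := by
      intro hh
      have := congrArg Fin.val hh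
      simp [Fin.val_zero, Fin.val_one'] at this
      omega
    have hsum : (∑ i, v i) = 0 := by
      have : ∀ i, v i = (if i = 0 then (1:ℝ) else 0) + (if i = 1 then (-1:ℝ) else 0) := by
        intro i
        by_cases h0 : i = 0
        · subst h0; simp [v, h01]
        · by_cases h1 : i = 1 <;> simp [v, h0, h1, show n ≠ 1 by omega]
      simp [this, Finset.sum_add_distrib, Finset.sum_ite_eq']
    have hsq : (∑ i, (v i)^2) = 2 := by
      have : ∀ i, (v i)^2 = (if i = 0 then (1:ℝ) else 0) + (if i = 1 then (1:ℝ) else 0) := by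
        intro i
        by_cases h0 : i = 0
        · subst h0; simp [v, h01]
        · by_cases h1 : i = 1 <;> simp [v, h0, h1, show n ≠ 1 by omega]
      rw [Finset.sum_congr rfl (fun i _ => this i)]
      simp [Finset.sum_add_distrib, Finset.sum_ite_eq']
      norm_num
    have h2 := hB.dotProduct_mulVec_nonneg v
    rw [key, hsum, hsq] at h2
    norm_num at h2
    linarith
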